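/- Let (A, *, α) be a Hom-Novikov superalgebra with H²_α(A,A) = 0 (every 2-Hom-cocycle is a coboundary δ¹_hom of a 1-Hom-cochain). Then (A, *, α) is analytically rigid: every 1-parameter formal deformation g_t is equivalent to the null deformation G₀. -/

import Mathlib

/-- A 1-parameter formal deformation of a Hom-Novikov superalgebra, given by its
sequence of coefficient bilinear maps. -/
def IsDeformation {𝕜 A : Type*} [Field 𝕜] [AddCommGroup A] [Module 𝕜 A]
    (G : ZMod 2 → Submodule 𝕜 A) (mul : A →ₗ[𝕜] A →ₗ[𝕜] A) (α : A →ₗ[𝕜] A)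
    (Gd : ℕ → A →ₗ[𝕜] A →ₗ[𝕜] A) : Prop :=
  Gd 0 = mul ∧
  (∀ n : ℕ, ∀ i j : ZMod 2, ∀ x ∈ G i, ∀ y ∈ G j, Gd n x y ∈ G (i + j)) ∧
  (∀ n : ℕ, ∀ x y : A, α (Gd n x y) = Gd n (α x) (α y)) ∧
  (∀ n : ℕ, ∀ i j k : ZMod 2, ∀ x ∈ G i, ∀ y ∈ G j, ∀ z ∈ G k,
    ∑ p ∈ Finset.HasAntidiagonal.antidiagonal n,
      (Gd p.1 (α x) (Gd p.2 y z) - Gd p.1 (Gd p.2 x y) (α z)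
        - ((-1 : 𝕜) ^ (i.val * j.val)) •
            (Gd p.1 (α y) (Gd p.2 x z) - Gd p.1 (Gd p.2 y x) (α z))) = 0) ∧
  (∀ n : ℕ, ∀ i j k : ZMod 2, ∀ x ∈ G i, ∀ y ∈ G j, ∀ z ∈ G k,
    ∑ p ∈ Finset.HasAntidiagonal.antidiagonal n,
      (Gd p.1 (Gd p.2 x y) (α z)
        - ((-1 : 𝕜) ^ (j.val * k.val)) • Gd p.1 (Gd p.2 x z) (α y)) = 0)




open Finset

namespace Stmt18Aux

variable {M : Type*} [AddCommMonoid M]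

/-- Sum over triples `(a,b,c)` with `a+b+c = n`. -/
def sum3 (n : ℕ) (F : ℕ → ℕ → ℕ → M) : M :=
  ∑ p ∈ antidiagonal n, ∑ q ∈ antidiagonal p.2, F p.1 q.1 q.2

lemma sum3_congr {n : ℕ} {F F' : ℕ → ℕ → ℕ → M}
    (h : ∀ a b c, a + b + c = n → F a b c = F' a b c) : sum3 n F = sum3 n F' := by
  unfold sum3
  refine Finset.sum_congr rfl fun p hp => Finset.sum_congr rfl fun q hq => ?_
  exact h p.1 q.1 q.2 (by
    have h1 := Finset.HasAntidiagonal.mem_antidiagonal.mp hp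
    have h2 := Finset.HasAntidiagonal.mem_antidiagonal.mp hq
    omega)

lemma sum3_swap23 (n : ℕ) (F : ℕ → ℕ → ℕ → M) :
    sum3 n F = sum3 n (fun a b c => F a c b) := by
  unfold sum3
  refine Finset.sum_congr rfl fun p _ => ?_
  simpa using (Finset.Nat.sum_antidiagonal_swap (f := fun q : ℕ × ℕ => F p.1 q.1 q.2)).symm

lemma sum3_rotate (n : ℕ) (F : ℕ → ℕ → ℕ → M) :
    sum3 n F = sum3 n (fun a b c => F b c a) := by
  unfold sum3
  rw [Finset.sum_sigma', Finset.sum_sigma']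
  apply Finset.sum_nbij' (fun ⟨⟨a, m⟩, ⟨b, c⟩⟩ => ⟨(c, a + b), (a, b)⟩)
    (fun ⟨⟨c, s⟩, ⟨a, b⟩⟩ => ⟨(a, b + c), (b, c)⟩) <;>
    simp only [Finset.mem_sigma, Finset.HasAntidiagonal.mem_antidiagonal] <;>
    rintro ⟨⟨a, m⟩, ⟨b, c⟩⟩ h <;> simp_all <;> omega

lemma sum3_rotate2 (n : ℕ) (F : ℕ → ℕ → ℕ → M) :
    sum3 n F = sum3 n (fun a b c => F c a b) := by
  rw [sum3_rotate, sum3_rotate]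

lemma sum3_rev (n : ℕ) (F : ℕ → ℕ → ℕ → M) :
    sum3 n F = sum3 n (fun a b c => F c b a) := by
  rw [sum3_rotate, sum3_swap23]

lemma sum3_swap12 (n : ℕ) (F : ℕ → ℕ → ℕ → M) :
    sum3 n F = sum3 n (fun a b c => F b a c) := by
  rw [sum3_rotate2, sum3_swap23]

lemma sum3_sub {N : Type*} [AddCommGroup N] (n : ℕ) (F F' : ℕ → ℕ → ℕ → N) :
    sum3 n (fun a b c => F a b c - F' a b c) = sum3 n F - sum3 n F' := by
  simp [sum3, Finset.sum_sub_distrib]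

lemma sum3_smul {R N : Type*} [Ring R] [AddCommGroup N] [Module R N] (n : ℕ) (r : R)
    (F : ℕ → ℕ → ℕ → N) :
    sum3 n (fun a b c => r • F a b c) = r • sum3 n F := by
  simp [sum3, Finset.smul_sum]

section Key

variable {𝕜 A : Type*} [Field 𝕜] [AddCommGroup A] [Module 𝕜 A]

variable (mul : A →ₗ[𝕜] A →ₗ[𝕜] A) (α : A →ₗ[𝕜] A) (Gd : ℕ → A →ₗ[𝕜] A →ₗ[𝕜] A)
  (ψ : ℕ → A →ₗ[𝕜] A) (n : ℕ)

/-- `(ψ ⋆ Gd)_m (x, y)`. -/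
def sgF (m : ℕ) (x y : A) : A := ∑ p ∈ antidiagonal m, ψ p.1 (Gd p.2 x y)

/-- `μ(ψ,ψ)_m (x, y)`. -/
def smF (m : ℕ) (x y : A) : A := ∑ p ∈ antidiagonal m, mul (ψ p.1 x) (ψ p.2 y)

/-- The `n`-th obstruction cochain. -/
def gF (x y : A) : A := sgF Gd ψ n x y - smF mul ψ n x y

/-- The obstruction cochain, as a bilinear map. -/
noncomputable def gL : A →ₗ[𝕜] A →ₗ[𝕜] A :=
  ∑ p ∈ antidiagonal n, ((Gd p.2).compr₂ (ψ p.1) - LinearMap.compl₁₂ mul (ψ p.1) (ψ p.2))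

lemma gL_apply (x y : A) : gL mul Gd ψ n x y = gF mul Gd ψ n x y := by
  simp [gL, gF, sgF, smF, LinearMap.sum_apply, Finset.sum_sub_distrib]

lemma sum_ad_extract {M : Type*} [AddCommGroup M] (m : ℕ) (F K : ℕ × ℕ → M)
    (h : ∀ p ∈ antidiagonal m, p ≠ (0, m) → F p = K p) :
    ∑ p ∈ antidiagonal m, F p = (F (0, m) - K (0, m)) + ∑ p ∈ antidiagonal m, K p := by
  have h1 : ∑ p ∈ antidiagonal m, (F p - K p) = F (0, m) - K (0, m) := by
    refine Finset.sum_eq_single_of_mem _ (by simp) fun p hp hne => ?_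
    rw [h p hp hne, sub_self]
  rw [Finset.sum_sub_distrib] at h1
  rw [← h1]; abel
  

section Lemmas

variable (h0 : Gd 0 = mul)
  (hψ0 : ψ 0 = LinearMap.id)
  (hψα : ∀ m x, ψ m (α x) = α (ψ m x))
  (hE : ∀ m, m < n → ∀ x y : A, sgF Gd ψ m x y = smF mul ψ m x y)

include h0 hψ0 hψα hE in
lemma L1 (x y z : A) :
    sum3 n (fun a b c => ψ a (Gd b (Gd c x y) (α z)))
      = gF mul Gd ψ n (mul x y) (α z) + mul (gF mul Gd ψ n x y) (α z)
        + sum3 n (fun a b c => mul (mul (ψ b x) (ψ c y)) (α (ψ a z))) := by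
  rw [sum3_rotate]
  have e1 : sum3 n (fun a b c => ψ b (Gd c (Gd a x y) (α z)))
      = ∑ p ∈ antidiagonal n, sgF Gd ψ p.2 (Gd p.1 x y) (α z) := rfl
  rw [e1, sum_ad_extract n _ (fun p => smF mul ψ p.2 (Gd p.1 x y) (α z)) (by
    intro p hp hne
    have hm := Finset.HasAntidiagonal.mem_antidiagonal.mp hp
    have hlt : p.2 < n := by
      rcases Nat.eq_zero_or_pos p.1 with h | h
      · exact absurd (Prod.ext h (by omega)) hne
      · omega
    exact hE p.2 hlt _ _)]
  have e2 : sgF Gd ψ n (Gd 0 x y) (α z) - smF mul ψ n (Gd 0 x y) (α z)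
      = gF mul Gd ψ n (mul x y) (α z) := by rw [h0]; rfl
  rw [e2]
  have e3 : ∑ p ∈ antidiagonal n, smF mul ψ p.2 (Gd p.1 x y) (α z)
      = sum3 n (fun a b c => mul (ψ b (Gd a x y)) (ψ c (α z))) := rfl
  rw [e3, sum3_rev]
  have e4 : sum3 n (fun a b c => mul (ψ b (Gd c x y)) (ψ a (α z)))
      = ∑ p ∈ antidiagonal n, mul (sgF Gd ψ p.2 x y) (ψ p.1 (α z)) := by
    refine Finset.sum_congr rfl fun p _ => ?_
    rw [sgF, map_sum, LinearMap.sum_apply]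
  rw [e4, sum_ad_extract n _ (fun p => mul (smF mul ψ p.2 x y) (ψ p.1 (α z))) (by
    intro p hp hne
    have hm := Finset.HasAntidiagonal.mem_antidiagonal.mp hp
    have hlt : p.2 < n := by
      rcases Nat.eq_zero_or_pos p.1 with h | h
      · exact absurd (Prod.ext h (by omega)) hne
      · omega
    rw [hE p.2 hlt])]
  have e5 : mul (sgF Gd ψ n x y) (ψ 0 (α z)) - mul (smF mul ψ n x y) (ψ 0 (α z))
      = mul (gF mul Gd ψ n x y) (α z) := by
    rw [gF, map_sub, LinearMap.sub_apply, hψ0]; rfl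
  rw [e5]
  have e6 : ∑ p ∈ antidiagonal n, mul (smF mul ψ p.2 x y) (ψ p.1 (α z))
      = sum3 n (fun a b c => mul (mul (ψ b x) (ψ c y)) (ψ a (α z))) := by
    refine Finset.sum_congr rfl fun p _ => ?_
    rw [smF, map_sum, LinearMap.sum_apply]
  rw [e6]
  have e7 : sum3 n (fun a b c => mul (mul (ψ b x) (ψ c y)) (ψ a (α z)))
      = sum3 n (fun a b c => mul (mul (ψ b x) (ψ c y)) (α (ψ a z))) :=
    sum3_congr fun a b c _ => by rw [hψα]
  rw [e7]; abel

include h0 hψ0 hψα hE in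
lemma L2 (x y z : A) :
    sum3 n (fun a b c => ψ a (Gd b (α x) (Gd c y z)))
      = gF mul Gd ψ n (α x) (mul y z) + mul (α x) (gF mul Gd ψ n y z)
        + sum3 n (fun a b c => mul (α (ψ a x)) (mul (ψ b y) (ψ c z))) := by
  rw [sum3_rotate]
  have e1 : sum3 n (fun a b c => ψ b (Gd c (α x) (Gd a y z)))
      = ∑ p ∈ antidiagonal n, sgF Gd ψ p.2 (α x) (Gd p.1 y z) := rfl
  rw [e1, sum_ad_extract n _ (fun p => smF mul ψ p.2 (α x) (Gd p.1 y z)) (by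
    intro p hp hne
    have hm := Finset.HasAntidiagonal.mem_antidiagonal.mp hp
    have hlt : p.2 < n := by
      rcases Nat.eq_zero_or_pos p.1 with h | h
      · exact absurd (Prod.ext h (by omega)) hne
      · omega
    exact hE p.2 hlt _ _)]
  have e2 : sgF Gd ψ n (α x) (Gd 0 y z) - smF mul ψ n (α x) (Gd 0 y z)
      = gF mul Gd ψ n (α x) (mul y z) := by rw [h0]; rfl
  rw [e2]
  have e3 : ∑ p ∈ antidiagonal n, smF mul ψ p.2 (α x) (Gd p.1 y z)
      = sum3 n (fun a b c => mul (ψ b (α x)) (ψ c (Gd a y z))) := rfl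
  rw [e3, sum3_rotate2]
  have e4 : sum3 n (fun a b c => mul (ψ a (α x)) (ψ b (Gd c y z)))
      = ∑ p ∈ antidiagonal n, mul (ψ p.1 (α x)) (sgF Gd ψ p.2 y z) := by
    refine Finset.sum_congr rfl fun p _ => ?_
    rw [sgF, map_sum]
  rw [e4, sum_ad_extract n _ (fun p => mul (ψ p.1 (α x)) (smF mul ψ p.2 y z)) (by
    intro p hp hne
    have hm := Finset.HasAntidiagonal.mem_antidiagonal.mp hp
    have hlt : p.2 < n := by
      rcases Nat.eq_zero_or_pos p.1 with h | h
      · exact absurd (Prod.ext h (by omega)) hne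
      · omega
    rw [hE p.2 hlt])]
  have e5 : mul (ψ 0 (α x)) (sgF Gd ψ n y z) - mul (ψ 0 (α x)) (smF mul ψ n y z)
      = mul (α x) (gF mul Gd ψ n y z) := by
    rw [gF, map_sub, hψ0]; rfl
  rw [e5]
  have e6 : ∑ p ∈ antidiagonal n, mul (ψ p.1 (α x)) (smF mul ψ p.2 y z)
      = sum3 n (fun a b c => mul (ψ a (α x)) (mul (ψ b y) (ψ c z))) := by
    refine Finset.sum_congr rfl fun p _ => ?_
    rw [smF, map_sum]
  rw [e6]
  have e7 : sum3 n (fun a b c => mul (ψ a (α x)) (mul (ψ b y) (ψ c z)))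
      = sum3 n (fun a b c => mul (α (ψ a x)) (mul (ψ b y) (ψ c z))) :=
    sum3_congr fun a b c _ => by rw [hψα]
  rw [e7]; abel

end Lemmas

lemma sum3_combo {R N : Type*} [Ring R] [AddCommGroup N] [Module R N] (m : ℕ) (r : R)
    (F1 F2 F3 F4 : ℕ → ℕ → ℕ → N) :
    sum3 m (fun a b c => F1 a b c - F2 a b c - r • (F3 a b c - F4 a b c))
      = sum3 m F1 - sum3 m F2 - r • (sum3 m F3 - sum3 m F4) := by
  simp [sum3, Finset.sum_sub_distrib, Finset.smul_sum, smul_sub]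

/-- Applying `ψ` termwise to a family of vanishing antidiagonal sums gives zero. -/
lemma L3gen (F : ℕ → ℕ → A) (h : ∀ m : ℕ, ∑ p ∈ antidiagonal m, F p.1 p.2 = 0) :
    sum3 n (fun a b c => ψ a (F b c)) = 0 := by
  unfold sum3
  refine Finset.sum_eq_zero fun p _ => ?_
  calc ∑ q ∈ antidiagonal p.2, ψ p.1 (F q.1 q.2)
      = ψ p.1 (∑ q ∈ antidiagonal p.2, F q.1 q.2) := (map_sum _ _ _).symm
    _ = 0 := by rw [h p.2, map_zero]

lemma sum3_combo2 {R N : Type*} [Ring R] [AddCommGroup N] [Module R N] (m : ℕ) (r : R)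
    (F1 F2 : ℕ → ℕ → ℕ → N) :
    sum3 m (fun a b c => F1 a b c - r • F2 a b c) = sum3 m F1 - r • sum3 m F2 := by
  simp [sum3, Finset.sum_sub_distrib, Finset.smul_sum]

section Graded

variable (G : ZMod 2 → Submodule 𝕜 A)
  (hψg : ∀ (m : ℕ) (i : ZMod 2), ∀ x ∈ G i, ψ m x ∈ G i)
  {i j k : ZMod 2} {x y z : A} (hx : x ∈ G i) (hy : y ∈ G j) (hz : z ∈ G k)

include hψg hx hy hz in
lemma L5 (hrn : ∀ i j k : ZMod 2, ∀ x ∈ G i, ∀ y ∈ G j, ∀ z ∈ G k,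
      mul (mul x y) (α z) = ((-1 : 𝕜) ^ (j.val * k.val)) • mul (mul x z) (α y)) :
    sum3 n (fun a b c => mul (mul (ψ b x) (ψ c y)) (α (ψ a z)))
      = ((-1 : 𝕜) ^ (j.val * k.val)) •
          sum3 n (fun a b c => mul (mul (ψ b x) (ψ c z)) (α (ψ a y))) := by
  have step : sum3 n (fun a b c => mul (mul (ψ b x) (ψ c y)) (α (ψ a z)))
      = sum3 n (fun a b c =>
          ((-1 : 𝕜) ^ (j.val * k.val)) • mul (mul (ψ b x) (ψ a z)) (α (ψ c y))) :=
    sum3_congr fun a b c _ =>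
      hrn i j k _ (hψg b i x hx) _ (hψg c j y hy) _ (hψg a k z hz)
  rw [step, sum3_smul]
  congr 1
  exact (sum3_rev n _).symm

include hψg hx hy hz in
lemma L6 (hls : ∀ i j k : ZMod 2, ∀ x ∈ G i, ∀ y ∈ G j, ∀ z ∈ G k,
      mul (mul x y) (α z) - mul (α x) (mul y z)
        = ((-1 : 𝕜) ^ (i.val * j.val)) • (mul (mul y x) (α z) - mul (α y) (mul x z))) :
    sum3 n (fun a b c => mul (α (ψ a x)) (mul (ψ b y) (ψ c z)))
      - sum3 n (fun a b c => mul (mul (ψ b x) (ψ c y)) (α (ψ a z)))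
      = ((-1 : 𝕜) ^ (i.val * j.val)) •
        (sum3 n (fun a b c => mul (α (ψ a y)) (mul (ψ b x) (ψ c z)))
          - sum3 n (fun a b c => mul (mul (ψ b y) (ψ c x)) (α (ψ a z)))) := by
  have step : sum3 n (fun a b c =>
        mul (mul (ψ a x) (ψ b y)) (α (ψ c z)) - mul (α (ψ a x)) (mul (ψ b y) (ψ c z)))
      = sum3 n (fun a b c => ((-1 : 𝕜) ^ (i.val * j.val)) •
          (mul (mul (ψ b y) (ψ a x)) (α (ψ c z)) - mul (α (ψ b y)) (mul (ψ a x) (ψ c z)))) :=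
    sum3_congr fun a b c _ =>
      hls i j k _ (hψg a i x hx) _ (hψg b j y hy) _ (hψg c k z hz)
  rw [sum3_sub, sum3_smul, sum3_sub] at step
  have r1 : sum3 n (fun a b c => mul (mul (ψ a x) (ψ b y)) (α (ψ c z)))
      = sum3 n (fun a b c => mul (mul (ψ b x) (ψ c y)) (α (ψ a z))) := sum3_rotate n _
  have r2 : sum3 n (fun a b c => mul (mul (ψ b y) (ψ a x)) (α (ψ c z)))
      = sum3 n (fun a b c => mul (mul (ψ b y) (ψ c x)) (α (ψ a z))) := sum3_rev n _
  have r3 : sum3 n (fun a b c => mul (α (ψ b y)) (mul (ψ a x) (ψ c z)))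
      = sum3 n (fun a b c => mul (α (ψ a y)) (mul (ψ b x) (ψ c z))) := sum3_swap12 n _
  rw [r1, r2, r3] at step
  rw [← neg_sub, step, ← smul_neg, neg_sub]

end Graded

lemma key (G : ZMod 2 → Submodule 𝕜 A)
    (hmul_even : ∀ i j : ZMod 2, ∀ x ∈ G i, ∀ y ∈ G j, mul x y ∈ G (i + j))
    (hα_mul : ∀ x y : A, α (mul x y) = mul (α x) (α y))
    (hls : ∀ i j k : ZMod 2, ∀ x ∈ G i, ∀ y ∈ G j, ∀ z ∈ G k,
      mul (mul x y) (α z) - mul (α x) (mul y z)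
        = ((-1 : 𝕜) ^ (i.val * j.val)) • (mul (mul y x) (α z) - mul (α y) (mul x z)))
    (hrn : ∀ i j k : ZMod 2, ∀ x ∈ G i, ∀ y ∈ G j, ∀ z ∈ G k,
      mul (mul x y) (α z) = ((-1 : 𝕜) ^ (j.val * k.val)) • mul (mul x z) (α y))
    (hH2 : ∀ g : A →ₗ[𝕜] A →ₗ[𝕜] A,
      (∀ i j : ZMod 2, ∀ x ∈ G i, ∀ y ∈ G j, g x y ∈ G (i + j)) →
      (∀ x y : A, α (g x y) = g (α x) (α y)) →
      (∀ i j k : ZMod 2, ∀ x ∈ G i, ∀ y ∈ G j, ∀ z ∈ G k,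
        g (α x) (mul y z)
          - ((-1 : 𝕜) ^ (i.val * j.val)) • g (α y) (mul x z)
          + ((-1 : 𝕜) ^ (i.val * j.val)) • g (mul y x) (α z)
          + mul (α x) (g y z)
          - ((-1 : 𝕜) ^ (i.val * j.val)) • mul (α y) (g x z)
          + ((-1 : 𝕜) ^ (i.val * j.val)) • mul (g y x) (α z)
          - ((-1 : 𝕜) ^ (j.val * k.val)) • g (mul x z) (α y)
          - ((-1 : 𝕜) ^ (j.val * k.val)) • mul (g x z) (α y) = 0) →
      ∃ f : A →ₗ[𝕜] A,
        (∀ i : ZMod 2, ∀ x ∈ G i, f x ∈ G i) ∧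
        (∀ x : A, f (α x) = α (f x)) ∧
        (∀ x y : A, g x y = mul x (f y) + mul (f x) y - f (mul x y)))
    (h0 : Gd 0 = mul)
    (hgrad : ∀ (m : ℕ) (i j : ZMod 2), ∀ x ∈ G i, ∀ y ∈ G j, Gd m x y ∈ G (i + j))
    (hαd : ∀ (m : ℕ) (x y : A), α (Gd m x y) = Gd m (α x) (α y))
    (hlsd : ∀ (m : ℕ) (i j k : ZMod 2), ∀ x ∈ G i, ∀ y ∈ G j, ∀ z ∈ G k,
      ∑ p ∈ antidiagonal m,
        (Gd p.1 (α x) (Gd p.2 y z) - Gd p.1 (Gd p.2 x y) (α z)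
          - ((-1 : 𝕜) ^ (i.val * j.val)) •
              (Gd p.1 (α y) (Gd p.2 x z) - Gd p.1 (Gd p.2 y x) (α z))) = 0)
    (hrnd : ∀ (m : ℕ) (i j k : ZMod 2), ∀ x ∈ G i, ∀ y ∈ G j, ∀ z ∈ G k,
      ∑ p ∈ antidiagonal m,
        (Gd p.1 (Gd p.2 x y) (α z)
          - ((-1 : 𝕜) ^ (j.val * k.val)) • Gd p.1 (Gd p.2 x z) (α y)) = 0)
    (hψ0 : ψ 0 = LinearMap.id)
    (hψg : ∀ (m : ℕ) (i : ZMod 2), ∀ x ∈ G i, ψ m x ∈ G i)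
    (hψα : ∀ (m : ℕ) (x : A), ψ m (α x) = α (ψ m x))
    (hE : ∀ m, m < n → ∀ x y : A, sgF Gd ψ m x y = smF mul ψ m x y) :
    ∃ f : A →ₗ[𝕜] A,
      (∀ i : ZMod 2, ∀ x ∈ G i, f x ∈ G i) ∧
      (∀ x : A, f (α x) = α (f x)) ∧
      (∀ x y : A, sgF Gd ψ n x y + f (mul x y)
        = smF mul ψ n x y + mul x (f y) + mul (f x) y) := by
  have hg1 : ∀ i j : ZMod 2, ∀ x ∈ G i, ∀ y ∈ G j, gL mul Gd ψ n x y ∈ G (i + j) := by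
    intro i j x hx y hy
    rw [gL_apply]
    unfold gF sgF smF
    exact sub_mem
      (Submodule.sum_mem _ fun p _ => hψg p.1 _ _ (hgrad p.2 i j x hx y hy))
      (Submodule.sum_mem _ fun p _ => hmul_even i j _ (hψg p.1 i x hx) _ (hψg p.2 j y hy))
  have hg2 : ∀ x y : A, α (gL mul Gd ψ n x y) = gL mul Gd ψ n (α x) (α y) := by
    intro x y
    rw [gL_apply, gL_apply]
    unfold gF sgF smF
    rw [map_sub, map_sum, map_sum]
    congr 1
    · exact Finset.sum_congr rfl fun p _ => by rw [← hψα, hαd]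
    · exact Finset.sum_congr rfl fun p _ => by rw [hα_mul, hψα, hψα]
  have hg3 : ∀ i j k : ZMod 2, ∀ x ∈ G i, ∀ y ∈ G j, ∀ z ∈ G k,
      gL mul Gd ψ n (α x) (mul y z)
        - ((-1 : 𝕜) ^ (i.val * j.val)) • gL mul Gd ψ n (α y) (mul x z)
        + ((-1 : 𝕜) ^ (i.val * j.val)) • gL mul Gd ψ n (mul y x) (α z)
        + mul (α x) (gL mul Gd ψ n y z)
        - ((-1 : 𝕜) ^ (i.val * j.val)) • mul (α y) (gL mul Gd ψ n x z)
        + ((-1 : 𝕜) ^ (i.val * j.val)) • mul (gL mul Gd ψ n y x) (α z)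
        - ((-1 : 𝕜) ^ (j.val * k.val)) • gL mul Gd ψ n (mul x z) (α y)
        - ((-1 : 𝕜) ^ (j.val * k.val)) • mul (gL mul Gd ψ n x z) (α y) = 0 := by
    intro i j k x hx y hy z hz
    have hv1 : sum3 n (fun a b c => ψ a
        (Gd b (α x) (Gd c y z) - Gd b (Gd c x y) (α z)
          - ((-1 : 𝕜) ^ (i.val * j.val)) •
              (Gd b (α y) (Gd c x z) - Gd b (Gd c y x) (α z)))) = 0 :=
      L3gen ψ n _ (fun m => hlsd m i j k x hx y hy z hz)
    have hv2 : sum3 n (fun a b c => ψ a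
        (Gd b (Gd c x y) (α z)
          - ((-1 : 𝕜) ^ (j.val * k.val)) • Gd b (Gd c x z) (α y))) = 0 :=
      L3gen ψ n _ (fun m => hrnd m i j k x hx y hy z hz)
    have hs1 : sum3 n (fun a b c => ψ a
        (Gd b (α x) (Gd c y z) - Gd b (Gd c x y) (α z)
          - ((-1 : 𝕜) ^ (i.val * j.val)) •
              (Gd b (α y) (Gd c x z) - Gd b (Gd c y x) (α z))))
        = sum3 n (fun a b c =>
            ψ a (Gd b (α x) (Gd c y z)) - ψ a (Gd b (Gd c x y) (α z))
              - ((-1 : 𝕜) ^ (i.val * j.val)) •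
                (ψ a (Gd b (α y) (Gd c x z)) - ψ a (Gd b (Gd c y x) (α z)))) :=
      sum3_congr fun a b c _ => by simp only [map_sub, map_smul]
    have hs2 : sum3 n (fun a b c => ψ a
        (Gd b (Gd c x y) (α z)
          - ((-1 : 𝕜) ^ (j.val * k.val)) • Gd b (Gd c x z) (α y)))
        = sum3 n (fun a b c =>
            ψ a (Gd b (Gd c x y) (α z))
              - ((-1 : 𝕜) ^ (j.val * k.val)) • ψ a (Gd b (Gd c x z) (α y))) :=
      sum3_congr fun a b c _ => by simp only [map_sub, map_smul]
    rw [hs1, sum3_combo] at hv1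
    rw [hs2, sum3_combo2] at hv2
    rw [L2 mul α Gd ψ n h0 hψ0 hψα hE x y z, L1 mul α Gd ψ n h0 hψ0 hψα hE x y z,
      L2 mul α Gd ψ n h0 hψ0 hψα hE y x z, L1 mul α Gd ψ n h0 hψ0 hψα hE y x z] at hv1
    rw [L1 mul α Gd ψ n h0 hψ0 hψα hE x y z, L1 mul α Gd ψ n h0 hψ0 hψα hE x z y] at hv2
    have hL6 := L6 mul α ψ n G hψg hx hy hz hls
    have hL5 := L5 mul α ψ n G hψg hx hy hz hrn
    have h6 : (sum3 n (fun a b c => mul (α (ψ a x)) (mul (ψ b y) (ψ c z)))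
          - sum3 n (fun a b c => mul (mul (ψ b x) (ψ c y)) (α (ψ a z))))
          - ((-1 : 𝕜) ^ (i.val * j.val)) •
            (sum3 n (fun a b c => mul (α (ψ a y)) (mul (ψ b x) (ψ c z)))
              - sum3 n (fun a b c => mul (mul (ψ b y) (ψ c x)) (α (ψ a z)))) = 0 :=
      sub_eq_zero.mpr hL6
    have h5 : sum3 n (fun a b c => mul (mul (ψ b x) (ψ c y)) (α (ψ a z)))
          - ((-1 : 𝕜) ^ (j.val * k.val)) •
            sum3 n (fun a b c => mul (mul (ψ b x) (ψ c z)) (α (ψ a y))) = 0 :=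
      sub_eq_zero.mpr hL5
    simp only [gL_apply]
    calc gF mul Gd ψ n (α x) (mul y z)
          - ((-1 : 𝕜) ^ (i.val * j.val)) • gF mul Gd ψ n (α y) (mul x z)
          + ((-1 : 𝕜) ^ (i.val * j.val)) • gF mul Gd ψ n (mul y x) (α z)
          + mul (α x) (gF mul Gd ψ n y z)
          - ((-1 : 𝕜) ^ (i.val * j.val)) • mul (α y) (gF mul Gd ψ n x z)
          + ((-1 : 𝕜) ^ (i.val * j.val)) • mul (gF mul Gd ψ n y x) (α z)
          - ((-1 : 𝕜) ^ (j.val * k.val)) • gF mul Gd ψ n (mul x z) (α y)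
          - ((-1 : 𝕜) ^ (j.val * k.val)) • mul (gF mul Gd ψ n x z) (α y)
        = ((gF mul Gd ψ n (α x) (mul y z) + mul (α x) (gF mul Gd ψ n y z)
              + sum3 n (fun a b c => mul (α (ψ a x)) (mul (ψ b y) (ψ c z))))
            - (gF mul Gd ψ n (mul x y) (α z) + mul (gF mul Gd ψ n x y) (α z)
              + sum3 n (fun a b c => mul (mul (ψ b x) (ψ c y)) (α (ψ a z))))
            - ((-1 : 𝕜) ^ (i.val * j.val)) •
              ((gF mul Gd ψ n (α y) (mul x z) + mul (α y) (gF mul Gd ψ n x z)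
                + sum3 n (fun a b c => mul (α (ψ a y)) (mul (ψ b x) (ψ c z))))
              - (gF mul Gd ψ n (mul y x) (α z) + mul (gF mul Gd ψ n y x) (α z)
                + sum3 n (fun a b c => mul (mul (ψ b y) (ψ c x)) (α (ψ a z))))))
          + ((gF mul Gd ψ n (mul x y) (α z) + mul (gF mul Gd ψ n x y) (α z)
              + sum3 n (fun a b c => mul (mul (ψ b x) (ψ c y)) (α (ψ a z))))
            - ((-1 : 𝕜) ^ (j.val * k.val)) •
              (gF mul Gd ψ n (mul x z) (α y) + mul (gF mul Gd ψ n x z) (α y)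
                + sum3 n (fun a b c => mul (mul (ψ b x) (ψ c z)) (α (ψ a y)))))
          - ((sum3 n (fun a b c => mul (α (ψ a x)) (mul (ψ b y) (ψ c z)))
              - sum3 n (fun a b c => mul (mul (ψ b x) (ψ c y)) (α (ψ a z))))
            - ((-1 : 𝕜) ^ (i.val * j.val)) •
              (sum3 n (fun a b c => mul (α (ψ a y)) (mul (ψ b x) (ψ c z)))
                - sum3 n (fun a b c => mul (mul (ψ b y) (ψ c x)) (α (ψ a z)))))
          - (sum3 n (fun a b c => mul (mul (ψ b x) (ψ c y)) (α (ψ a z)))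
            - ((-1 : 𝕜) ^ (j.val * k.val)) •
              sum3 n (fun a b c => mul (mul (ψ b x) (ψ c z)) (α (ψ a y)))) := by
          simp only [smul_add, smul_sub]; abel
      _ = 0 := by rw [hv1, hv2, h6, h5]; simp
  obtain ⟨f, hf1, hf2, hf3⟩ := hH2 (gL mul Gd ψ n) hg1 hg2 hg3
  refine ⟨f, hf1, hf2, fun x y => ?_⟩
  have h1 : sgF Gd ψ n x y - smF mul ψ n x y
      = mul x (f y) + mul (f x) y - f (mul x y) := by
    have h2 := hf3 x y
    rw [gL_apply] at h2
    exact h2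
  rw [← sub_eq_zero]
  calc sgF Gd ψ n x y + f (mul x y)
        - (smF mul ψ n x y + mul x (f y) + mul (f x) y)
      = (sgF Gd ψ n x y - smF mul ψ n x y)
        - (mul x (f y) + mul (f x) y - f (mul x y)) := by abel
    _ = 0 := sub_eq_zero.mpr h1

end Key

section Build

variable {𝕜 A : Type*} [Field 𝕜] [AddCommGroup A] [Module 𝕜 A]
variable (G : ZMod 2 → Submodule 𝕜 A) (mul : A →ₗ[𝕜] A →ₗ[𝕜] A) (α : A →ₗ[𝕜] A)
  (Gd : ℕ → A →ₗ[𝕜] A →ₗ[𝕜] A)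

/-- The conditions required of the `n`-th coefficient of the equivalence. -/
def Cond (n : ℕ) (prev : ℕ → A →ₗ[𝕜] A) (f : A →ₗ[𝕜] A) : Prop :=
  (∀ i : ZMod 2, ∀ x ∈ G i, f x ∈ G i) ∧ (∀ x, f (α x) = α (f x)) ∧
  ∀ x y : A, sgF Gd prev n x y + f (mul x y)
    = smF mul prev n x y + mul x (f y) + mul (f x) y

open scoped Classical in
noncomputable def pick (n : ℕ) (prev : ℕ → A →ₗ[𝕜] A) : A →ₗ[𝕜] A :=
  if h : ∃ f, Cond G mul α Gd n prev f then h.choose else 0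

/-- Stage `k` of the construction of the formal equivalence. -/
noncomputable def Phi : ℕ → ℕ → (A →ₗ[𝕜] A)
  | 0 => fun m => if m = 0 then LinearMap.id else 0
  | (k+1) => Function.update (Phi k) (k+1) (pick G mul α Gd (k+1) (Phi k))

lemma Phi_zero (k : ℕ) : Phi G mul α Gd k 0 = LinearMap.id := by
  induction k with
  | zero => simp [Phi]
  | succ k ih => rw [Phi, Function.update_of_ne (by omega : (0:ℕ) ≠ k+1), ih]

lemma Phi_gt (k m : ℕ) (h : k < m) : Phi G mul α Gd k m = 0 := by
  induction k with
  | zero => simp only [Phi]; rw [if_neg (by omega : ¬ m = 0)]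
  | succ k ih => rw [Phi, Function.update_of_ne (by omega : m ≠ k+1), ih (by omega)]

lemma Phi_stable (k m : ℕ) (h : m ≤ k) : Phi G mul α Gd (k+1) m = Phi G mul α Gd k m := by
  rw [Phi, Function.update_of_ne (by omega : m ≠ k+1)]

lemma Phi_diag (k m : ℕ) (h : m ≤ k) : Phi G mul α Gd k m = Phi G mul α Gd m m := by
  induction k with
  | zero => have : m = 0 := by omega
            rw [this]
  | succ k ih =>
      rcases Nat.eq_or_lt_of_le h with h' | h'
      · rw [h']
      · rw [Phi_stable G mul α Gd k m (by omega), ih (by omega)]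

lemma sum_ad_two {M : Type*} [AddCommGroup M] (k : ℕ) (D : ℕ × ℕ → M)
    (h : ∀ p ∈ antidiagonal (k+1), p ≠ (k+1, 0) → p ≠ (0, k+1) → D p = 0) :
    ∑ p ∈ antidiagonal (k+1), D p = D (k+1, 0) + D (0, k+1) := by
  have h1 : ((k+1 : ℕ), (0 : ℕ)) ∈ antidiagonal (k+1) := by simp
  rw [← Finset.add_sum_erase _ D h1]
  congr 1
  have h2 : ((0 : ℕ), (k+1 : ℕ)) ∈ (antidiagonal (k+1)).erase (k+1, 0) := by
    rw [Finset.mem_erase]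
    exact ⟨by simp [Prod.ext_iff], by simp⟩
  rw [← Finset.add_sum_erase _ D h2]
  have h3 : ∑ p ∈ ((antidiagonal (k+1)).erase (k+1, 0)).erase (0, k+1), D p = 0 := by
    refine Finset.sum_eq_zero fun p hp => ?_
    rw [Finset.mem_erase, Finset.mem_erase] at hp
    exact h p hp.2.2 hp.2.1 hp.1
  rw [h3, add_zero]


variable (hmul_even : ∀ i j : ZMod 2, ∀ x ∈ G i, ∀ y ∈ G j, mul x y ∈ G (i + j))
  (hα_mul : ∀ x y : A, α (mul x y) = mul (α x) (α y))
  (hls : ∀ i j k : ZMod 2, ∀ x ∈ G i, ∀ y ∈ G j, ∀ z ∈ G k,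
    mul (mul x y) (α z) - mul (α x) (mul y z)
      = ((-1 : 𝕜) ^ (i.val * j.val)) • (mul (mul y x) (α z) - mul (α y) (mul x z)))
  (hrn : ∀ i j k : ZMod 2, ∀ x ∈ G i, ∀ y ∈ G j, ∀ z ∈ G k,
    mul (mul x y) (α z) = ((-1 : 𝕜) ^ (j.val * k.val)) • mul (mul x z) (α y))
  (hH2 : ∀ g : A →ₗ[𝕜] A →ₗ[𝕜] A,
    (∀ i j : ZMod 2, ∀ x ∈ G i, ∀ y ∈ G j, g x y ∈ G (i + j)) →
    (∀ x y : A, α (g x y) = g (α x) (α y)) →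
    (∀ i j k : ZMod 2, ∀ x ∈ G i, ∀ y ∈ G j, ∀ z ∈ G k,
      g (α x) (mul y z)
        - ((-1 : 𝕜) ^ (i.val * j.val)) • g (α y) (mul x z)
        + ((-1 : 𝕜) ^ (i.val * j.val)) • g (mul y x) (α z)
        + mul (α x) (g y z)
        - ((-1 : 𝕜) ^ (i.val * j.val)) • mul (α y) (g x z)
        + ((-1 : 𝕜) ^ (i.val * j.val)) • mul (g y x) (α z)
        - ((-1 : 𝕜) ^ (j.val * k.val)) • g (mul x z) (α y)
        - ((-1 : 𝕜) ^ (j.val * k.val)) • mul (g x z) (α y) = 0) →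
    ∃ f : A →ₗ[𝕜] A,
      (∀ i : ZMod 2, ∀ x ∈ G i, f x ∈ G i) ∧
      (∀ x : A, f (α x) = α (f x)) ∧
      (∀ x y : A, g x y = mul x (f y) + mul (f x) y - f (mul x y)))
  (h0 : Gd 0 = mul)
  (hgrad : ∀ (m : ℕ) (i j : ZMod 2), ∀ x ∈ G i, ∀ y ∈ G j, Gd m x y ∈ G (i + j))
  (hαd : ∀ (m : ℕ) (x y : A), α (Gd m x y) = Gd m (α x) (α y))
  (hlsd : ∀ (m : ℕ) (i j k : ZMod 2), ∀ x ∈ G i, ∀ y ∈ G j, ∀ z ∈ G k,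
    ∑ p ∈ antidiagonal m,
      (Gd p.1 (α x) (Gd p.2 y z) - Gd p.1 (Gd p.2 x y) (α z)
        - ((-1 : 𝕜) ^ (i.val * j.val)) •
            (Gd p.1 (α y) (Gd p.2 x z) - Gd p.1 (Gd p.2 y x) (α z))) = 0)
  (hrnd : ∀ (m : ℕ) (i j k : ZMod 2), ∀ x ∈ G i, ∀ y ∈ G j, ∀ z ∈ G k,
    ∑ p ∈ antidiagonal m,
      (Gd p.1 (Gd p.2 x y) (α z)
        - ((-1 : 𝕜) ^ (j.val * k.val)) • Gd p.1 (Gd p.2 x z) (α y)) = 0)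

include hmul_even hα_mul hls hrn hH2 h0 hgrad hαd hlsd hrnd in
lemma Phi_inv (k : ℕ) :
    (∀ (m : ℕ) (i : ZMod 2), ∀ x ∈ G i, Phi G mul α Gd k m x ∈ G i) ∧
    (∀ (m : ℕ) (x : A), Phi G mul α Gd k m (α x) = α (Phi G mul α Gd k m x)) ∧
    (∀ m, m ≤ k → ∀ x y : A,
      sgF Gd (Phi G mul α Gd k) m x y = smF mul (Phi G mul α Gd k) m x y) := by
  induction k with
  | zero =>
      refine ⟨?_, ?_, ?_⟩
      · intro m i x hx
        simp only [Phi]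
        by_cases h : m = 0 <;> simp [h, hx, Submodule.zero_mem]
      · intro m x
        simp only [Phi]
        by_cases h : m = 0 <;> simp [h]
      · intro m hm x y
        have : m = 0 := by omega
        subst this
        simp [sgF, smF, Phi, h0]
  | succ k ih =>
      obtain ⟨ih1, ih2, ih3⟩ := ih
      have hex : ∃ f, Cond G mul α Gd (k+1) (Phi G mul α Gd k) f := by
        obtain ⟨f, c1, c2, c3⟩ := key mul α Gd (Phi G mul α Gd k) (k+1) G hmul_even hα_mul
          hls hrn hH2 h0 hgrad hαd hlsd hrnd (Phi_zero G mul α Gd k) ih1 ih2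
          (fun m hm => ih3 m (by omega))
        exact ⟨f, c1, c2, c3⟩
      have hcond : Cond G mul α Gd (k+1) (Phi G mul α Gd k)
          (pick G mul α Gd (k+1) (Phi G mul α Gd k)) := by
        rw [pick, dif_pos hex]
        exact hex.choose_spec
      set f := pick G mul α Gd (k+1) (Phi G mul α Gd k) with hf
      have hPhiSucc : ∀ m : ℕ, m ≠ k+1 →
          Phi G mul α Gd (k+1) m = Phi G mul α Gd k m := fun m hm => by
        rw [Phi, Function.update_of_ne hm]
      have hPhiTop : Phi G mul α Gd (k+1) (k+1) = f := by
        rw [Phi, Function.update_self]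
      refine ⟨?_, ?_, ?_⟩
      · intro m i x hx
        by_cases h : m = k+1
        · rw [h, hPhiTop]; exact hcond.1 i x hx
        · rw [hPhiSucc m h]; exact ih1 m i x hx
      · intro m x
        by_cases h : m = k+1
        · rw [h, hPhiTop]; exact hcond.2.1 x
        · rw [hPhiSucc m h]; exact ih2 m x
      · intro m hm x y
        by_cases h : m = k+1
        · subst h
          have T1 : sgF Gd (Phi G mul α Gd (k+1)) (k+1) x y
              = sgF Gd (Phi G mul α Gd k) (k+1) x y + f (mul x y) := by
            have hD := sum_ad_two k (fun p =>
                Phi G mul α Gd (k+1) p.1 (Gd p.2 x y)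
                  - Phi G mul α Gd k p.1 (Gd p.2 x y)) (by
              intro p hp h1 h2
              have hmem := Finset.HasAntidiagonal.mem_antidiagonal.mp hp
              have hne : p.1 ≠ k+1 := by
                intro hh
                exact h1 (Prod.ext hh (by omega))
              show Phi G mul α Gd (k+1) p.1 (Gd p.2 x y)
                - Phi G mul α Gd k p.1 (Gd p.2 x y) = 0
              rw [hPhiSucc p.1 hne, sub_self])
            simp only at hD
            rw [hPhiTop, Phi_gt G mul α Gd k (k+1) (by omega), Phi_zero, Phi_zero,
              h0] at hD
            simp only [LinearMap.zero_apply, sub_zero, LinearMap.id_coe, id_eq,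
              sub_self, add_zero] at hD
            have := Finset.sum_sub_distrib (s := antidiagonal (k+1))
              (f := fun p => Phi G mul α Gd (k+1) p.1 (Gd p.2 x y))
              (g := fun p => Phi G mul α Gd k p.1 (Gd p.2 x y))
            rw [this] at hD
            unfold sgF
            rw [← sub_eq_iff_eq_add']
            rw [hD]
          have T2 : smF mul (Phi G mul α Gd (k+1)) (k+1) x y
              = smF mul (Phi G mul α Gd k) (k+1) x y + mul x (f y) + mul (f x) y := by
            have hD := sum_ad_two k (fun p =>
                mul (Phi G mul α Gd (k+1) p.1 x) (Phi G mul α Gd (k+1) p.2 y)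
                  - mul (Phi G mul α Gd k p.1 x) (Phi G mul α Gd k p.2 y)) (by
              intro p hp h1 h2
              have hmem := Finset.HasAntidiagonal.mem_antidiagonal.mp hp
              have hne1 : p.1 ≠ k+1 := by
                intro hh
                exact h1 (Prod.ext hh (by omega))
              have hne2 : p.2 ≠ k+1 := by
                intro hh
                exact h2 (Prod.ext (by omega) hh)
              show mul (Phi G mul α Gd (k+1) p.1 x) (Phi G mul α Gd (k+1) p.2 y)
                - mul (Phi G mul α Gd k p.1 x) (Phi G mul α Gd k p.2 y) = 0
              rw [hPhiSucc p.1 hne1, hPhiSucc p.2 hne2, sub_self])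
            simp only at hD
            simp only [hPhiTop, Phi_gt G mul α Gd k (k+1) (by omega), Phi_zero] at hD
            simp only [LinearMap.zero_apply, LinearMap.id_coe, id_eq, map_zero,
              LinearMap.map_zero] at hD
            have := Finset.sum_sub_distrib (s := antidiagonal (k+1))
              (f := fun p => mul (Phi G mul α Gd (k+1) p.1 x) (Phi G mul α Gd (k+1) p.2 y))
              (g := fun p => mul (Phi G mul α Gd k p.1 x) (Phi G mul α Gd k p.2 y))
            rw [this] at hD
            unfold smF
            rw [sub_eq_iff_eq_add] at hD
            rw [hD]
            abel
          calc sgF Gd (Phi G mul α Gd (k+1)) (k+1) x y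
              = sgF Gd (Phi G mul α Gd k) (k+1) x y + f (mul x y) := T1
            _ = smF mul (Phi G mul α Gd k) (k+1) x y + mul x (f y) + mul (f x) y :=
                hcond.2.2 x y
            _ = smF mul (Phi G mul α Gd (k+1)) (k+1) x y := T2.symm
        · have hmk : m ≤ k := by omega
          have e1 : sgF Gd (Phi G mul α Gd (k+1)) m x y
              = sgF Gd (Phi G mul α Gd k) m x y := by
            unfold sgF
            refine Finset.sum_congr rfl fun p hp => ?_
            have hmem := Finset.HasAntidiagonal.mem_antidiagonal.mp hp
            rw [hPhiSucc p.1 (by omega)]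
          have e2 : smF mul (Phi G mul α Gd (k+1)) m x y
              = smF mul (Phi G mul α Gd k) m x y := by
            unfold smF
            refine Finset.sum_congr rfl fun p hp => ?_
            have hmem := Finset.HasAntidiagonal.mem_antidiagonal.mp hp
            rw [hPhiSucc p.1 (by omega), hPhiSucc p.2 (by omega)]
          rw [e1, e2]
          exact ih3 m hmk x y

end Build

end Stmt18Aux

theorem stmt18
    (𝕜 A : Type*) [Field 𝕜] [AddCommGroup A] [Module 𝕜 A]
    (G : ZMod 2 → Submodule 𝕜 A) (hG : DirectSum.IsInternal G)
    (mul : A →ₗ[𝕜] A →ₗ[𝕜] A) (α : A →ₗ[𝕜] A)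
    (hmul_even : ∀ i j : ZMod 2, ∀ x ∈ G i, ∀ y ∈ G j, mul x y ∈ G (i + j))
    (hα_even : ∀ i : ZMod 2, ∀ x ∈ G i, α x ∈ G i)
    (hα_mul : ∀ x y : A, α (mul x y) = mul (α x) (α y))
    (hls : ∀ i j k : ZMod 2, ∀ x ∈ G i, ∀ y ∈ G j, ∀ z ∈ G k,
      mul (mul x y) (α z) - mul (α x) (mul y z)
        = ((-1 : 𝕜) ^ (i.val * j.val)) • (mul (mul y x) (α z) - mul (α y) (mul x z)))
    (hrn : ∀ i j k : ZMod 2, ∀ x ∈ G i, ∀ y ∈ G j, ∀ z ∈ G k,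
      mul (mul x y) (α z) = ((-1 : 𝕜) ^ (j.val * k.val)) • mul (mul x z) (α y))
    (hH2 : ∀ g : A →ₗ[𝕜] A →ₗ[𝕜] A,
      (∀ i j : ZMod 2, ∀ x ∈ G i, ∀ y ∈ G j, g x y ∈ G (i + j)) →
      (∀ x y : A, α (g x y) = g (α x) (α y)) →
      (∀ i j k : ZMod 2, ∀ x ∈ G i, ∀ y ∈ G j, ∀ z ∈ G k,
        g (α x) (mul y z)
          - ((-1 : 𝕜) ^ (i.val * j.val)) • g (α y) (mul x z)
          + ((-1 : 𝕜) ^ (i.val * j.val)) • g (mul y x) (α z)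
          + mul (α x) (g y z)
          - ((-1 : 𝕜) ^ (i.val * j.val)) • mul (α y) (g x z)
          + ((-1 : 𝕜) ^ (i.val * j.val)) • mul (g y x) (α z)
          - ((-1 : 𝕜) ^ (j.val * k.val)) • g (mul x z) (α y)
          - ((-1 : 𝕜) ^ (j.val * k.val)) • mul (g x z) (α y) = 0) →
      ∃ f : A →ₗ[𝕜] A,
        (∀ i : ZMod 2, ∀ x ∈ G i, f x ∈ G i) ∧
        (∀ x : A, f (α x) = α (f x)) ∧
        (∀ x y : A, g x y = mul x (f y) + mul (f x) y - f (mul x y))) :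
    ∀ Gd : ℕ → A →ₗ[𝕜] A →ₗ[𝕜] A, IsDeformation G mul α Gd →
      ∃ φ : ℕ → A →ₗ[𝕜] A,
        φ 0 = LinearMap.id ∧
        (∀ n : ℕ, ∀ x : A, φ n (α x) = α (φ n x)) ∧
        (∀ n : ℕ, ∀ x y : A,
          ∑ p ∈ Finset.HasAntidiagonal.antidiagonal n, φ p.1 (Gd p.2 x y)
            = ∑ p ∈ Finset.HasAntidiagonal.antidiagonal n, mul (φ p.1 x) (φ p.2 y)) := by
  intro Gd hdef
  obtain ⟨h0, hgrad, hαd, hlsd, hrnd⟩ := hdef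
  have inv := Stmt18Aux.Phi_inv G mul α Gd hmul_even hα_mul hls hrn hH2 h0 hgrad hαd
    hlsd hrnd
  refine ⟨fun m => Stmt18Aux.Phi G mul α Gd m m, ?_, ?_, ?_⟩
  · exact Stmt18Aux.Phi_zero G mul α Gd 0
  · intro m x
    exact (inv m).2.1 m x
  · intro n x y
    have h := (inv n).2.2 n le_rfl x y
    unfold Stmt18Aux.sgF Stmt18Aux.smF at h
    calc ∑ p ∈ Finset.HasAntidiagonal.antidiagonal n, Stmt18Aux.Phi G mul α Gd p.1 p.1 (Gd p.2 x y)
        = ∑ p ∈ Finset.HasAntidiagonal.antidiagonal n, Stmt18Aux.Phi G mul α Gd n p.1 (Gd p.2 x y) := by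
          refine Finset.sum_congr rfl fun p hp => ?_
          have := Finset.HasAntidiagonal.mem_antidiagonal.mp hp
          rw [Stmt18Aux.Phi_diag G mul α Gd n p.1 (by omega)]
      _ = ∑ p ∈ Finset.HasAntidiagonal.antidiagonal n,
            mul (Stmt18Aux.Phi G mul α Gd n p.1 x) (Stmt18Aux.Phi G mul α Gd n p.2 y) := h
      _ = ∑ p ∈ Finset.HasAntidiagonal.antidiagonal n,
            mul (Stmt18Aux.Phi G mul α Gd p.1 p.1 x) (Stmt18Aux.Phi G mul α Gd p.2 p.2 y) := by
          refine Finset.sum_congr rfl fun p hp => ?_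
          have := Finset.HasAntidiagonal.mem_antidiagonal.mp hp
          rw [Stmt18Aux.Phi_diag G mul α Gd n p.1 (by omega),
            Stmt18Aux.Phi_diag G mul α Gd n p.2 (by omega)]
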